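/- Matrix Hölder inequality: for symmetric real n×n matrices A and B and real numbers s, t ≥ 1 with 1/s + 1/t = 1, one has Tr(A·B) ≤ (Tr(|A|^s))^{1/s} · (Tr(|B|^t))^{1/t}. -/

import Mathlib

open Matrix

private lemma trace_diag_conj (n : ℕ) (d e : Fin n → ℝ) (M : Matrix (Fin n) (Fin n) ℝ) :
    (diagonal d * M * diagonal e * star M).trace = ∑ i, ∑ j, d i * e j * (M i j)^2 := by
  simp only [Matrix.trace, Matrix.diag, Matrix.mul_apply, Matrix.diagonal_apply,
    Matrix.star_apply, star_trivial, ite_mul, zero_mul, mul_ite, mul_zero,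
    Finset.sum_ite_eq, Finset.sum_ite_eq', Finset.mem_univ, if_true]
  refine Finset.sum_congr rfl fun i _ => Finset.sum_congr rfl fun j _ => by ring

/-- Matrix Hölder inequality: for symmetric real `n×n` matrices `A`, `B` and reals
`s, t ≥ 1` with `1/s + 1/t = 1`, `Tr(A·B) ≤ (Tr(|A|^s))^(1/s) · (Tr(|B|^t))^(1/t)`,
where `|A|^s` is defined via the functional calculus `x ↦ |x|^s` applied to `A`. -/
theorem matrix_holder (n : ℕ) (A B : Matrix (Fin n) (Fin n) ℝ)
    (hA : A.IsHermitian) (hB : B.IsHermitian)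
    (s t : ℝ) (hs : 1 ≤ s) (ht : 1 ≤ t) (hst : 1 / s + 1 / t = 1) :
    (A * B).trace ≤
      ((hA.cfc fun x : ℝ => |x| ^ s).trace) ^ (1 / s) *
      ((hB.cfc fun x : ℝ => |x| ^ t).trace) ^ (1 / t) := by
  have hs0 : (0:ℝ) < s := one_pos.trans_le hs
  have ht0 : (0:ℝ) < t := one_pos.trans_le ht
  have hs1 : 1 < s := by
    rcases hs.lt_or_eq with h | h
    · exact h
    · exfalso
      rw [← h, div_one] at hst
      have h1 : 1 / t = 0 := by linarith
      have h2 : 0 < 1 / t := by positivity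
      linarith
  have hpq : Real.HolderConjugate s t :=
    Real.holderConjugate_iff.mpr ⟨hs1, by rw [← one_div, ← one_div]; exact hst⟩
  set U : Matrix (Fin n) (Fin n) ℝ := (hA.eigenvectorUnitary : Matrix (Fin n) (Fin n) ℝ) with hU
  set V : Matrix (Fin n) (Fin n) ℝ := (hB.eigenvectorUnitary : Matrix (Fin n) (Fin n) ℝ) with hV
  set lam := hA.eigenvalues with hlam
  set mu := hB.eigenvalues with hmu
  have hUmem := (Unitary.mem_iff).mp hA.eigenvectorUnitary.2
  have hVmem := (Unitary.mem_iff).mp hB.eigenvectorUnitary.2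
  set M : Matrix (Fin n) (Fin n) ℝ := star U * V with hM
  have hstarM : star M = star V * U := by rw [hM, StarMul.star_mul, star_star]
  have hM1 : M * star M = 1 := by
    rw [hM, hstarM, mul_assoc, ← mul_assoc V, hVmem.2, one_mul, hUmem.1]
  have hM2 : star M * M = 1 := by
    rw [hM, hstarM, mul_assoc, ← mul_assoc U, hUmem.2, one_mul, hVmem.1]
  have hrow : ∀ i, ∑ j, (M i j)^2 = 1 := by
    intro i
    have h := congrFun (congrFun hM1 i) i
    simpa [Matrix.mul_apply, Matrix.star_apply, Matrix.one_apply, sq] using h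
  have hcol : ∀ j, ∑ i, (M i j)^2 = 1 := by
    intro j
    have h := congrFun (congrFun hM2 j) j
    simpa [Matrix.mul_apply, Matrix.star_apply, Matrix.one_apply, sq, mul_comm] using h
  -- trace identity
  have hkey : (A * B).trace = ∑ i, ∑ j, lam i * mu j * (M i j)^2 := by
    conv_lhs => rw [hA.spectral_theorem, hB.spectral_theorem, Unitary.conjStarAlgAut_apply,
      Unitary.conjStarAlgAut_apply]
    have hmat : (U * diagonal (RCLike.ofReal ∘ lam) * star U)
          * (V * diagonal (RCLike.ofReal ∘ mu) * star V)
        = U * (diagonal (RCLike.ofReal ∘ lam) * (star U * V)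
            * diagonal (RCLike.ofReal ∘ mu) * star V) := by
      simp only [Matrix.mul_assoc]
    rw [hmat, Matrix.trace_mul_comm]
    have hmat2 : (diagonal (RCLike.ofReal ∘ lam) * (star U * V)
          * diagonal (RCLike.ofReal ∘ mu) * star V) * U
        = diagonal (RCLike.ofReal ∘ lam) * M * diagonal (RCLike.ofReal ∘ mu) * star M := by
      rw [hstarM, hM]
      simp only [Matrix.mul_assoc]
    rw [hmat2]
    simpa [RCLike.ofReal_real_eq_id] using trace_diag_conj n lam mu M
  -- traces of the functional calculus
  have hcfcA : (hA.cfc fun x : ℝ => |x| ^ s).trace = ∑ i, |lam i| ^ s := by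
    rw [Matrix.IsHermitian.cfc, Unitary.conjStarAlgAut_apply, Matrix.trace_mul_comm, ← Matrix.mul_assoc, hUmem.1, one_mul,
      Matrix.trace_diagonal]
    simp [RCLike.ofReal_real_eq_id, hlam]
  have hcfcB : (hB.cfc fun x : ℝ => |x| ^ t).trace = ∑ i, |mu i| ^ t := by
    rw [Matrix.IsHermitian.cfc, Unitary.conjStarAlgAut_apply, Matrix.trace_mul_comm, ← Matrix.mul_assoc, hVmem.1, one_mul,
      Matrix.trace_diagonal]
    simp [RCLike.ofReal_real_eq_id, hmu]
  rw [hcfcA, hcfcB, hkey]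
  -- Hölder on the doubly-stochastic weights
  set F : Fin n × Fin n → ℝ := fun p => ((M p.1 p.2)^2) ^ (1/s) * |lam p.1| with hF
  set G : Fin n × Fin n → ℝ := fun p => ((M p.1 p.2)^2) ^ (1/t) * |mu p.2| with hG
  have hFnn : ∀ p ∈ Finset.univ (α := Fin n × Fin n), 0 ≤ F p := fun p _ => by positivity
  have hGnn : ∀ p ∈ Finset.univ (α := Fin n × Fin n), 0 ≤ G p := fun p _ => by positivity
  have holder := Real.inner_le_Lp_mul_Lq_of_nonneg (s := Finset.univ) hpq hFnn hGnn
  have hFG : ∀ p : Fin n × Fin n, F p * G p = |lam p.1| * |mu p.2| * (M p.1 p.2)^2 := by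
    intro p
    have hx : (0:ℝ) ≤ (M p.1 p.2)^2 := sq_nonneg _
    have : ((M p.1 p.2)^2) ^ (1/s) * ((M p.1 p.2)^2) ^ (1/t) = (M p.1 p.2)^2 := by
      rw [← Real.rpow_add_of_nonneg hx (by positivity) (by positivity), hst, Real.rpow_one]
    rw [hF, hG]
    calc ((M p.1 p.2)^2) ^ (1/s) * |lam p.1| * (((M p.1 p.2)^2) ^ (1/t) * |mu p.2|)
        = ((M p.1 p.2)^2) ^ (1/s) * ((M p.1 p.2)^2) ^ (1/t) * (|lam p.1| * |mu p.2|) := by ring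
      _ = |lam p.1| * |mu p.2| * (M p.1 p.2)^2 := by rw [this]; ring
  have hFs : ∀ p : Fin n × Fin n, F p ^ s = (M p.1 p.2)^2 * |lam p.1| ^ s := by
    intro p
    rw [hF, Real.mul_rpow (by positivity) (abs_nonneg _),
      ← Real.rpow_mul (sq_nonneg _), one_div_mul_cancel hs0.ne', Real.rpow_one]
  have hGt : ∀ p : Fin n × Fin n, G p ^ t = (M p.1 p.2)^2 * |mu p.2| ^ t := by
    intro p
    rw [hG, Real.mul_rpow (by positivity) (abs_nonneg _),
      ← Real.rpow_mul (sq_nonneg _), one_div_mul_cancel ht0.ne', Real.rpow_one]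
  have hsumF : ∑ p : Fin n × Fin n, F p ^ s = ∑ i, |lam i| ^ s := by
    simp only [hFs]
    rw [Fintype.sum_prod_type]
    refine Finset.sum_congr rfl fun i _ => ?_
    dsimp only
    rw [← Finset.sum_mul, hrow i, one_mul]
  have hsumG : ∑ p : Fin n × Fin n, G p ^ t = ∑ j, |mu j| ^ t := by
    simp only [hGt]
    rw [Fintype.sum_prod_type_right]
    refine Finset.sum_congr rfl fun j _ => ?_
    dsimp only
    rw [← Finset.sum_mul, hcol j, one_mul]
  calc ∑ i, ∑ j, lam i * mu j * (M i j)^2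
      ≤ ∑ i, ∑ j, |lam i| * |mu j| * (M i j)^2 := by
        refine Finset.sum_le_sum fun i _ => Finset.sum_le_sum fun j _ => ?_
        have h1 : lam i * mu j ≤ |lam i| * |mu j| :=
          (le_abs_self _).trans_eq (abs_mul _ _)
        exact mul_le_mul_of_nonneg_right h1 (sq_nonneg _)
    _ = ∑ p : Fin n × Fin n, F p * G p := by
        rw [Fintype.sum_prod_type]
        exact Finset.sum_congr rfl fun i _ => Finset.sum_congr rfl fun j _ => (hFG (i, j)).symm
    _ ≤ (∑ p : Fin n × Fin n, F p ^ s) ^ (1 / s) * (∑ p : Fin n × Fin n, G p ^ t) ^ (1 / t) :=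
        holder
    _ = (∑ i, |lam i| ^ s) ^ (1 / s) * (∑ i, |mu i| ^ t) ^ (1 / t) := by
        rw [hsumF, hsumG]
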